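/- For any two matrices U ∈ ℂ^{m×p} and V ∈ ℂ^{q×m}, the matrix E := U(VU)†V satisfies N(E) = N(U*V*V) = N(UU*V*V). -/

import Mathlib

open Matrix

/-- The four Penrose conditions characterizing the Moore-Penrose inverse. -/
def IsMoorePenrose {m n : ℕ} (A : Matrix (Fin m) (Fin n) ℂ)
    (X : Matrix (Fin n) (Fin m) ℂ) : Prop :=
  A * X * A = A ∧ X * A * X = X ∧ (A * X)ᴴ = A * X ∧ (X * A)ᴴ = X * A

/-- The range (column space) of a matrix, as a subspace of Euclidean space. -/
noncomputable def mrange {m n : ℕ} (A : Matrix (Fin m) (Fin n) ℂ) :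
    Submodule ℂ (EuclideanSpace ℂ (Fin m)) :=
  LinearMap.range (Matrix.toEuclideanLin A)

/-- The null space of a matrix, as a subspace of Euclidean space. -/
noncomputable def mker {m n : ℕ} (A : Matrix (Fin m) (Fin n) ℂ) :
    Submodule ℂ (EuclideanSpace ℂ (Fin n)) :=
  LinearMap.ker (Matrix.toEuclideanLin A)

lemma mem_mker_iff {m n : ℕ} (A : Matrix (Fin m) (Fin n) ℂ) (x : EuclideanSpace ℂ (Fin n)) :
    x ∈ mker A ↔ A *ᵥ (WithLp.equiv 2 (Fin n → ℂ)) x = 0 := by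
  simp only [mker, LinearMap.mem_ker, Matrix.toEuclideanLin_apply]
  constructor
  · intro h; have := congrArg (WithLp.equiv 2 (Fin m → ℂ)) h; simpa using this
  · intro h; simp [show A *ᵥ x.ofLp = 0 from h]

lemma mker_eq_of {a b n : ℕ} (A : Matrix (Fin a) (Fin n) ℂ) (B : Matrix (Fin b) (Fin n) ℂ)
    (h : ∀ y : Fin n → ℂ, A *ᵥ y = 0 ↔ B *ᵥ y = 0) : mker A = mker B := by
  ext x; rw [mem_mker_iff, mem_mker_iff, h]

open scoped ComplexOrder in
lemma aux_conjT {a b : ℕ} (A : Matrix (Fin a) (Fin b) ℂ) (y : Fin a → ℂ)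
    (h : A *ᵥ (Aᴴ *ᵥ y) = 0) : Aᴴ *ᵥ y = 0 := by
  have key : star (Aᴴ *ᵥ y) ⬝ᵥ (Aᴴ *ᵥ y) = 0 := by
    rw [star_mulVec, conjTranspose_conjTranspose, ← dotProduct_mulVec, h, dotProduct_zero]
  exact (dotProduct_star_self_eq_zero).mp key

/-- For any matrices `U ∈ ℂ^{m×p}` and `V ∈ ℂ^{q×m}`, the matrix
`E = U (VU)† V` satisfies `N(E) = N(U*V*V) = N(UU*V*V)`. -/
theorem stmt9 {m p q : ℕ} (U : Matrix (Fin m) (Fin p) ℂ) (V : Matrix (Fin q) (Fin m) ℂ)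
    (X : Matrix (Fin p) (Fin q) ℂ) (hX : IsMoorePenrose (V * U) X) :
    mker (U * X * V) = mker (Uᴴ * Vᴴ * V) ∧
      mker (U * X * V) = mker (U * Uᴴ * Vᴴ * V) := by
  obtain ⟨h1, h2, h3, h4⟩ := hX
  -- (V*U*X)ᴴ = V*U*X, rearranged
  have h3' : Xᴴ * Uᴴ * Vᴴ = V * U * X := by
    have := h3
    simp only [conjTranspose_mul, ← Matrix.mul_assoc] at this
    exact this
  -- Aᴴ A X = Aᴴ where A = V*U
  have id1 : Uᴴ * Vᴴ * V * U * X = Uᴴ * Vᴴ := by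
    have := congrArg conjTranspose h1
    simp only [conjTranspose_mul, ← Matrix.mul_assoc] at this
    calc Uᴴ * Vᴴ * V * U * X = Uᴴ * Vᴴ * (V * U * X) := by simp only [Matrix.mul_assoc]
      _ = Uᴴ * Vᴴ * (Xᴴ * Uᴴ * Vᴴ) := by rw [h3']
      _ = Uᴴ * Vᴴ * Xᴴ * Uᴴ * Vᴴ := by simp only [Matrix.mul_assoc]
      _ = Uᴴ * Vᴴ := this
  -- X Xᴴ Aᴴ = X
  have id2 : X * Xᴴ * Uᴴ * Vᴴ = X := by
    calc X * Xᴴ * Uᴴ * Vᴴ = X * (Xᴴ * Uᴴ * Vᴴ) := by simp only [Matrix.mul_assoc]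
      _ = X * (V * U * X) := by rw [h3']
      _ = X * (V * U) * X := by simp only [Matrix.mul_assoc]
      _ = X := h2
  have key1 : ∀ y : Fin m → ℂ, (U * X * V) *ᵥ y = 0 ↔ (Uᴴ * Vᴴ * V) *ᵥ y = 0 := by
    intro y
    constructor
    · intro h
      have hw : (X * V) *ᵥ y = 0 := by
        have h' : (X * V * (U * X * V)) *ᵥ y = 0 := by
          rw [← Matrix.mulVec_mulVec, h, Matrix.mulVec_zero]
        rwa [show X * V * (U * X * V) = X * (V * U) * X * V from by
          simp only [Matrix.mul_assoc], h2] at h'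
      have e : (Uᴴ * Vᴴ * V * U) * (X * V) = Uᴴ * Vᴴ * V := by
        rw [show (Uᴴ * Vᴴ * V * U) * (X * V) = (Uᴴ * Vᴴ * V * U * X) * V from by
          simp only [Matrix.mul_assoc], id1]
      rw [← e, ← Matrix.mulVec_mulVec, hw, Matrix.mulVec_zero]
    · intro h
      have hw : (X * V) *ᵥ y = 0 := by
        have e : (X * Xᴴ) * (Uᴴ * Vᴴ * V) = X * V := by
          rw [show (X * Xᴴ) * (Uᴴ * Vᴴ * V) = (X * Xᴴ * Uᴴ * Vᴴ) * V from by
            simp only [Matrix.mul_assoc], id2]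
        rw [← e, ← Matrix.mulVec_mulVec, h, Matrix.mulVec_zero]
      rw [show U * X * V = U * (X * V) from Matrix.mul_assoc U X V,
        ← Matrix.mulVec_mulVec, hw, Matrix.mulVec_zero]
  have key2 : ∀ y : Fin m → ℂ, (Uᴴ * Vᴴ * V) *ᵥ y = 0 ↔ (U * Uᴴ * Vᴴ * V) *ᵥ y = 0 := by
    intro y
    have eL : (Uᴴ * Vᴴ * V) *ᵥ y = Uᴴ *ᵥ ((Vᴴ * V) *ᵥ y) := by
      rw [Matrix.mulVec_mulVec, ← Matrix.mul_assoc]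
    have eR : (U * Uᴴ * Vᴴ * V) *ᵥ y = U *ᵥ (Uᴴ *ᵥ ((Vᴴ * V) *ᵥ y)) := by
      rw [Matrix.mulVec_mulVec, Matrix.mulVec_mulVec]
      simp only [Matrix.mul_assoc]
    constructor
    · intro h
      rw [eL] at h
      rw [eR, h, Matrix.mulVec_zero]
    · intro h
      rw [eR] at h
      rw [eL]
      exact aux_conjT U _ h
  exact ⟨mker_eq_of _ _ key1, mker_eq_of _ _ fun y => (key1 y).trans (key2 y)⟩
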